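/- Let a, b, c ≥ 2 be pairwise coprime integers. Set δ = abc − ab − bc − ca and assume δ > 0 (i.e., 1/a + 1/b + 1/c < 1). Let Q = (c, ac−a−c, a) and R = (b, a, ab−a−b). Then the gcd of the 2×2 minors of (Q,R) equals δ. -/

import Mathlib

/-- gcd of the absolute values of the three 2×2 minors of the 3×2 matrix
with columns `(p₁,p₂,p₃)` and `(q₁,q₂,q₃)`. -/
def mg (p₁ p₂ p₃ q₁ q₂ q₃ : ℤ) : ℕ :=
  Int.gcd (p₁ * q₂ - p₂ * q₁) (Int.gcd (p₁ * q₃ - p₃ * q₁) (p₂ * q₃ - p₃ * q₂))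

theorem stmt5 (a b c : ℤ) (ha : 2 ≤ a) (hb : 2 ≤ b) (hc : 2 ≤ c)
    (hab : Int.gcd a b = 1) (hbc : Int.gcd b c = 1) (hac : Int.gcd a c = 1)
    (δ : ℤ) (hδ : δ = a*b*c - a*b - b*c - c*a) (hpos : 0 < δ) :
    (mg c (a*c - a - c) a b a (a*b - a - b) : ℤ) = δ := by
  have h1 : c * a - (a*c - a - c) * b = -δ := by rw [hδ]; ring
  have h2 : c * (a*b - a - b) - a * b = δ := by rw [hδ]; ring
  have h3 : (a*c - a - c) * (a*b - a - b) - a * a = (a - 1) * δ := by rw [hδ]; ring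
  unfold mg
  rw [h1, h2, h3, Int.neg_gcd]
  have h4 : Int.gcd δ ((a - 1) * δ) = δ.natAbs :=
    Int.gcd_eq_natAbs_left (dvd_mul_left δ (a - 1))
  have hδn : (δ.natAbs : ℤ) = δ := Int.natAbs_of_nonneg hpos.le
  rw [h4, hδn, Int.gcd_self, hδn]
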